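/- arXiv:1405.4130 — 2 statements merged into one kernel-verified Lean document; each statement's English description precedes it below -/
import Mathlib

section
/- Let (x_m) be uniformly distributed in a compact metrizable space X with probability measure \rho_X, and (y_m) uniformly distributed in a compact metrizable space Y with probability measure \rho_Y. Define the convolution sequence (u_m) in X \times Y by: for the unique k \geq 1 with (k-1)^2 < m \leq k^2, set u_m = (x_k, y_i) if m = (k-1)^2 + 2i - 1 and u_m = (x_i, y_k) if m = (k-1)^2 + 2i. Then (u_m) is uniformly distributed in X \times Y with respect to the product measure \rho_X \times \rho_Y. -/
open MeasureTheory Filter Topology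

private lemma block_sum (g : ℕ → ℝ) (q K : ℕ) :
    ∑ m ∈ Finset.Ioc q (q + (2 * K + 1)), g m
      = ∑ i ∈ Finset.Icc 1 (K + 1), g (q + 2 * i - 1)
        + ∑ i ∈ Finset.Icc 1 K, g (q + 2 * i) := by
  induction K with
  | zero => simp
  | succ K ih =>
    have hL : ∑ m ∈ Finset.Ioc q (q + (2 * (K + 1) + 1)), g m
        = (∑ m ∈ Finset.Ioc q (q + (2 * K + 1)), g m) + g (q + 2 * K + 2) + g (q + 2 * K + 3) := by
      have h1 : q + (2 * (K + 1) + 1) = (q + (2 * K + 1) + 1) + 1 := by ring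
      rw [h1, Finset.sum_Ioc_succ_top (by omega), Finset.sum_Ioc_succ_top (by omega)]
      have e2 : q + (2 * K + 1) + 1 + 1 = q + 2 * K + 3 := by omega
      have e1 : q + (2 * K + 1) + 1 = q + 2 * K + 2 := by omega
      rw [e2, e1]
    have hO : ∑ i ∈ Finset.Icc 1 (K + 1 + 1), g (q + 2 * i - 1)
        = (∑ i ∈ Finset.Icc 1 (K + 1), g (q + 2 * i - 1)) + g (q + 2 * K + 3) := by
      rw [Finset.sum_Icc_succ_top (by omega)]
      congr 1
    have hE : ∑ i ∈ Finset.Icc 1 (K + 1), g (q + 2 * i)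
        = (∑ i ∈ Finset.Icc 1 K, g (q + 2 * i)) + g (q + 2 * K + 2) := by
      rw [Finset.sum_Icc_succ_top (by omega)]
      congr 1
    rw [hL, hO, hE, ih]
    ring

private lemma sq_sum {X Y : Type*} (f : X × Y → ℝ) (x : ℕ → X) (y : ℕ → Y) (u : ℕ → X × Y)
    (hodd : ∀ k i : ℕ, 1 ≤ i → i ≤ k → u ((k - 1) ^ 2 + 2 * i - 1) = (x k, y i))
    (heven : ∀ k i : ℕ, 1 ≤ i → i < k → u ((k - 1) ^ 2 + 2 * i) = (x i, y k)) :
    ∀ K, ∑ m ∈ Finset.Icc 1 (K ^ 2), f (u m)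
      = ∑ a ∈ Finset.Icc 1 K, ∑ b ∈ Finset.Icc 1 K, f (x a, y b) := by
  intro K
  induction K with
  | zero => simp
  | succ K ih =>
    have hIcc : ∀ n : ℕ, Finset.Icc 1 n = Finset.Ioc 0 n := fun n => rfl
    have hsplit : (K + 1) ^ 2 = K ^ 2 + (2 * K + 1) := by ring
    rw [hIcc, hsplit, ← Finset.sum_Ioc_consecutive (fun m => f (u m)) (Nat.zero_le (K ^ 2))
      (Nat.le_add_right _ _), ← hIcc, ih, block_sum]
    have ho : ∀ i ∈ Finset.Icc 1 (K + 1), f (u (K ^ 2 + 2 * i - 1)) = f (x (K + 1), y i) := by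
      intro i hi
      rw [Finset.mem_Icc] at hi
      have := hodd (K + 1) i hi.1 hi.2
      simpa using congrArg f this
    have he : ∀ i ∈ Finset.Icc 1 K, f (u (K ^ 2 + 2 * i)) = f (x i, y (K + 1)) := by
      intro i hi
      rw [Finset.mem_Icc] at hi
      have := heven (K + 1) i hi.1 (by omega)
      simpa using congrArg f this
    rw [Finset.sum_congr rfl ho, Finset.sum_congr rfl he,
      Finset.sum_Icc_succ_top (by omega : 1 ≤ K + 1)
        (fun a => ∑ b ∈ Finset.Icc 1 (K + 1), f (x a, y b))]
    have hrow : ∀ a, ∑ b ∈ Finset.Icc 1 (K + 1), f (x a, y b)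
        = ∑ b ∈ Finset.Icc 1 K, f (x a, y b) + f (x a, y (K + 1)) := fun a =>
      Finset.sum_Icc_succ_top (by omega) _
    simp_rw [hrow]
    rw [Finset.sum_add_distrib]
    ring

private lemma arith_bound {a r n k C : ℝ} (hk : 1 ≤ k) (hn : k ^ 2 ≤ n)
    (hn2 : n ≤ k ^ 2 + 2 * k) (hr : |r| ≤ 2 * k * C) (ha : |a| ≤ k ^ 2 * C) :
    |(a + r) / n - a / k ^ 2| ≤ 4 * C / k := by
  have hk0 : (0 : ℝ) < k := by linarith
  have hn0 : (0 : ℝ) < n := by nlinarith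
  have hC : 0 ≤ C := by nlinarith [abs_nonneg r]
  have hr' := abs_le.1 hr
  have ha' := abs_le.1 ha
  rw [div_sub_div _ _ (ne_of_gt hn0) (by positivity), abs_div,
    abs_of_pos (by positivity : (0 : ℝ) < n * k ^ 2), div_le_div_iff₀ (by positivity) hk0]
  have key : |(a + r) * k ^ 2 - n * a| ≤ 4 * C * n * k := by
    rw [abs_le]
    constructor
    · nlinarith [mul_le_mul_of_nonneg_right hn (by positivity : (0:ℝ) ≤ k ^ 2 * C),
        mul_le_mul_of_nonneg_right hn2 (by positivity : (0:ℝ) ≤ k * C), sq_nonneg k,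
        mul_le_mul_of_nonneg_left hn (by positivity : (0:ℝ) ≤ k * C)]
    · nlinarith [mul_le_mul_of_nonneg_right hn (by positivity : (0:ℝ) ≤ k ^ 2 * C),
        mul_le_mul_of_nonneg_right hn2 (by positivity : (0:ℝ) ≤ k * C), sq_nonneg k,
        mul_le_mul_of_nonneg_left hn (by positivity : (0:ℝ) ≤ k * C)]
  calc |(a + r) * k ^ 2 - n * a| * k ≤ (4 * C * n * k) * k :=
        mul_le_mul_of_nonneg_right key hk0.le
    _ = 4 * C * (n * k ^ 2) := by ring

/-- Uniform distribution via sampling averages of continuous functions (sequence indexed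
from 1, with `u 0` irrelevant). -/
def IsUniformlyDistributed {X : Type*} [TopologicalSpace X] [MeasurableSpace X]
    (μ : Measure X) (w : ℕ → X) : Prop :=
  ∀ f : C(X, ℝ),
    Tendsto (fun N : ℕ => (∑ m ∈ Finset.Icc 1 N, f (w m)) / (N : ℝ)) atTop
      (𝓝 (∫ x, f x ∂μ))

private lemma double_avg {X Y : Type*} [TopologicalSpace X] [CompactSpace X]
    [TopologicalSpace.MetrizableSpace X] [MeasurableSpace X] [BorelSpace X]
    [TopologicalSpace Y] [CompactSpace Y] [TopologicalSpace.MetrizableSpace Y]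
    [MeasurableSpace Y] [BorelSpace Y]
    (ρX : Measure X) [IsProbabilityMeasure ρX]
    (ρY : Measure Y) [IsProbabilityMeasure ρY]
    (x : ℕ → X) (y : ℕ → Y)
    (hx : IsUniformlyDistributed ρX x) (hy : IsUniformlyDistributed ρY y)
    (f : C(X × Y, ℝ)) :
    Tendsto (fun K : ℕ =>
        (∑ a ∈ Finset.Icc 1 K, ∑ b ∈ Finset.Icc 1 K, f (x a, y b)) / (K : ℝ) ^ 2)
      atTop (𝓝 (∫ p, f p ∂(ρX.prod ρY))) := by
  letI : MetricSpace X := TopologicalSpace.metrizableSpaceMetric X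
  letI : MetricSpace Y := TopologicalSpace.metrizableSpaceMetric Y
  haveI : SecondCountableTopology X := by infer_instance
  haveI : SecondCountableTopology Y := by infer_instance
  set F : X → ℝ := fun x0 => ∫ y0, f (x0, y0) ∂ρY with hF
  have hfy_cont : ∀ x0 : X, Continuous fun y0 => f (x0, y0) :=
    fun x0 => f.continuous.comp (continuous_const.prodMk continuous_id)
  have hfy_int : ∀ x0 : X, Integrable (fun y0 => f (x0, y0)) ρY := by
    intro x0
    refine ⟨(hfy_cont x0).aestronglyMeasurable, ?_⟩
    apply HasFiniteIntegral.of_bounded (C := ‖f‖)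
    exact Filter.Eventually.of_forall fun y0 => f.norm_coe_le_norm (x0, y0)
  have hFc : Continuous F := by
    apply continuous_of_dominated (bound := fun _ => ‖f‖)
    · exact fun x0 => (hfy_cont x0).aestronglyMeasurable
    · exact fun x0 => Filter.Eventually.of_forall fun y0 => f.norm_coe_le_norm (x0, y0)
    · exact integrable_const _
    · exact Filter.Eventually.of_forall fun y0 =>
        f.continuous.comp (continuous_id.prodMk continuous_const)
  have hfint : Integrable (fun p => f p) (ρX.prod ρY) := by
    refine ⟨f.continuous.aestronglyMeasurable, ?_⟩
    apply HasFiniteIntegral.of_bounded (C := ‖f‖)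
    exact Filter.Eventually.of_forall fun p => f.norm_coe_le_norm p
  have hI : ∫ p, f p ∂(ρX.prod ρY) = ∫ x0, F x0 ∂ρX := integral_prod _ hfint
  set g : ℕ → X → ℝ := fun K x0 => (∑ b ∈ Finset.Icc 1 K, f (x0, y b)) / (K : ℝ) with hg
  have htc : ∀ c : X, Tendsto (fun K => g K c) atTop (𝓝 (F c)) := fun c =>
    hy ⟨fun y0 => f (c, y0), hfy_cont c⟩
  have huc : UniformContinuous (f : X × Y → ℝ) :=
    CompactSpace.uniformContinuous_of_continuous f.continuous
  have hunif : ∀ ε : ℝ, 0 < ε → ∀ᶠ K in atTop, ∀ x0 : X, dist (g K x0) (F x0) ≤ ε := by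
    intro ε hε
    obtain ⟨δ, hδ0, hδ⟩ := Metric.uniformContinuous_iff.1 huc (ε / 3) (by linarith)
    have hclose : ∀ x0 c : X, dist x0 c < δ → ∀ y0 : Y,
        dist (f (x0, y0)) (f (c, y0)) < ε / 3 := by
      intro x0 c h y0
      apply hδ
      rw [Prod.dist_eq]
      simpa using h
    obtain ⟨t, ht⟩ := IsCompact.elim_finite_subcover (isCompact_univ (X := X))
      (fun c : X => Metric.ball c δ) (fun _ => Metric.isOpen_ball)
      (fun x0 _ => Set.mem_iUnion.2 ⟨x0, Metric.mem_ball_self hδ0⟩)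
    have hev : ∀ᶠ K in atTop, ∀ c ∈ t, dist (g K c) (F c) < ε / 3 := by
      rw [eventually_all_finset]
      intro c _
      have := (htc c).eventually (Metric.ball_mem_nhds (F c) (by linarith : (0:ℝ) < ε / 3))
      simpa [Metric.mem_ball] using this
    filter_upwards [hev] with K hK
    intro x0
    obtain ⟨c, hct, hxc⟩ : ∃ c ∈ t, x0 ∈ Metric.ball c δ := by
      have := ht (Set.mem_univ x0)
      simpa using this
    rw [Metric.mem_ball] at hxc
    have h1 : dist (g K x0) (g K c) ≤ ε / 3 := by
      rw [hg]
      simp only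
      rw [Real.dist_eq, ← sub_div, abs_div, Nat.abs_cast]
      rcases Nat.eq_zero_or_pos K with h | h
      · simp [h]; linarith
      · rw [div_le_iff₀ (by exact_mod_cast h)]
        rw [← Finset.sum_sub_distrib]
        calc |∑ b ∈ Finset.Icc 1 K, (f (x0, y b) - f (c, y b))|
            ≤ ∑ b ∈ Finset.Icc 1 K, |f (x0, y b) - f (c, y b)| := Finset.abs_sum_le_sum_abs _ _
          _ ≤ ∑ b ∈ Finset.Icc 1 K, ε / 3 := Finset.sum_le_sum fun b _ =>
              le_of_lt (by simpa [Real.dist_eq] using hclose x0 c hxc (y b))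
          _ = K * (ε / 3) := by
              rw [Finset.sum_const, Nat.card_Icc]
              simp [mul_comm]
          _ = ε / 3 * K := by ring
    have h3 : dist (F c) (F x0) ≤ ε / 3 := by
      rw [hF, Real.dist_eq]
      simp only
      rw [← integral_sub (hfy_int c) (hfy_int x0)]
      rw [← Real.norm_eq_abs]
      calc ‖∫ y0, (f (c, y0) - f (x0, y0)) ∂ρY‖
          ≤ (ε / 3) * (ρY Set.univ).toReal := by
            apply norm_integral_le_of_norm_le_const
            apply Filter.Eventually.of_forall
            intro y0
            have := hclose x0 c hxc y0
            rw [Real.dist_eq] at this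
            rw [Real.norm_eq_abs, abs_sub_comm]
            linarith
        _ = ε / 3 := by simp
    calc dist (g K x0) (F x0)
        ≤ dist (g K x0) (g K c) + dist (g K c) (F c) + dist (F c) (F x0) := dist_triangle4 _ _ _ _
      _ ≤ ε / 3 + ε / 3 + ε / 3 := by
          have h2 := hK c hct
          linarith
      _ = ε := by ring
  have hB : Tendsto (fun K : ℕ => (∑ a ∈ Finset.Icc 1 K, F (x a)) / (K : ℝ)) atTop
      (𝓝 (∫ x0, F x0 ∂ρX)) := hx ⟨F, hFc⟩
  have hAeq : ∀ K : ℕ, (∑ a ∈ Finset.Icc 1 K, ∑ b ∈ Finset.Icc 1 K, f (x a, y b)) / (K : ℝ) ^ 2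
      = (∑ a ∈ Finset.Icc 1 K, g K (x a)) / (K : ℝ) := by
    intro K
    rw [hg]
    simp only
    rw [← Finset.sum_div, div_div, sq]
  have hAB : Tendsto (fun K : ℕ =>
      (∑ a ∈ Finset.Icc 1 K, g K (x a)) / (K : ℝ)
        - (∑ a ∈ Finset.Icc 1 K, F (x a)) / (K : ℝ)) atTop (𝓝 0) := by
    rw [NormedAddCommGroup.tendsto_nhds_zero]
    intro ε hε
    filter_upwards [hunif (ε / 2) (by linarith)] with K hK
    rw [← sub_div, ← Finset.sum_sub_distrib, Real.norm_eq_abs, abs_div, Nat.abs_cast]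
    rcases Nat.eq_zero_or_pos K with h | h
    · simp [h]; linarith
    · rw [div_lt_iff₀ (by exact_mod_cast h)]
      calc |∑ a ∈ Finset.Icc 1 K, (g K (x a) - F (x a))|
          ≤ ∑ a ∈ Finset.Icc 1 K, |g K (x a) - F (x a)| := Finset.abs_sum_le_sum_abs _ _
        _ ≤ ∑ a ∈ Finset.Icc 1 K, ε / 2 := Finset.sum_le_sum fun a _ => by
            simpa [Real.dist_eq] using hK (x a)
        _ = K * (ε / 2) := by rw [Finset.sum_const, Nat.card_Icc]; simp [mul_comm]
        _ < ε * K := by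
            have hK1 : (1 : ℝ) ≤ K := by exact_mod_cast h
            nlinarith
  have hfin := hAB.add hB
  simp only [sub_add_cancel, zero_add] at hfin
  rw [hI]
  exact Tendsto.congr (fun K => (hAeq K).symm) hfin

theorem ud_convolution
    {X Y : Type*} [TopologicalSpace X] [CompactSpace X] [TopologicalSpace.MetrizableSpace X]
    [MeasurableSpace X] [BorelSpace X]
    [TopologicalSpace Y] [CompactSpace Y] [TopologicalSpace.MetrizableSpace Y]
    [MeasurableSpace Y] [BorelSpace Y]
    (ρX : Measure X) [IsProbabilityMeasure ρX]
    (ρY : Measure Y) [IsProbabilityMeasure ρY]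
    (x : ℕ → X) (y : ℕ → Y)
    (hx : IsUniformlyDistributed ρX x) (hy : IsUniformlyDistributed ρY y)
    (u : ℕ → X × Y)
    (hodd : ∀ k i : ℕ, 1 ≤ i → i ≤ k → u ((k - 1) ^ 2 + 2 * i - 1) = (x k, y i))
    (heven : ∀ k i : ℕ, 1 ≤ i → i < k → u ((k - 1) ^ 2 + 2 * i) = (x i, y k)) :
    IsUniformlyDistributed (ρX.prod ρY) u := by
  intro f
  set C : ℝ := ‖f‖ with hC
  have hC0 : 0 ≤ C := norm_nonneg f
  set S : ℕ → ℝ := fun N => ∑ m ∈ Finset.Icc 1 N, f (u m) with hS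
  have hsq := sq_sum (fun p => f p) x y u hodd heven
  have hT : Tendsto (fun K : ℕ => S (K ^ 2) / (K : ℝ) ^ 2) atTop
      (𝓝 (∫ p, f p ∂(ρX.prod ρY))) := by
    apply Tendsto.congr (f₁ := fun K : ℕ =>
      (∑ a ∈ Finset.Icc 1 K, ∑ b ∈ Finset.Icc 1 K, f (x a, y b)) / (K : ℝ) ^ 2)
    · intro K
      rw [hS]
      simp only
      rw [hsq K]
    · exact double_avg ρX ρY x y hx hy f
  have hsqrt : Tendsto Nat.sqrt atTop atTop := by
    apply tendsto_atTop_atTop.2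
    intro b
    refine ⟨b ^ 2, fun n hn => ?_⟩
    calc b = Nat.sqrt (b ^ 2) := (Nat.sqrt_eq' b).symm
      _ ≤ Nat.sqrt n := Nat.sqrt_le_sqrt hn
  have hTs : Tendsto (fun N : ℕ => S (Nat.sqrt N ^ 2) / ((Nat.sqrt N : ℝ)) ^ 2) atTop
      (𝓝 (∫ p, f p ∂(ρX.prod ρY))) := hT.comp hsqrt
  have hbound : ∀ᶠ N in atTop,
      ‖S N / (N : ℝ) - S (Nat.sqrt N ^ 2) / ((Nat.sqrt N : ℝ)) ^ 2‖
        ≤ 4 * C / (Nat.sqrt N : ℝ) := by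
    filter_upwards [eventually_ge_atTop 1] with N hN
    set K : ℕ := Nat.sqrt N with hK
    have hK1 : 1 ≤ K := Nat.sqrt_pos.2 (by omega)
    have hKN : K ^ 2 ≤ N := Nat.sqrt_le' N
    have hNK : N ≤ K ^ 2 + 2 * K := by
      have h2 : N < (K + 1) ^ 2 := by rw [hK]; exact Nat.lt_succ_sqrt' N
      have h3 : (K + 1) ^ 2 = K ^ 2 + 2 * K + 1 := by ring
      omega
    have htail : S N = S (K ^ 2) + ∑ m ∈ Finset.Ioc (K ^ 2) N, f (u m) := by
      rw [hS]
      simp only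
      rw [show Finset.Icc 1 N = Finset.Ioc 0 N from rfl,
        show Finset.Icc 1 (K ^ 2) = Finset.Ioc 0 (K ^ 2) from rfl,
        Finset.sum_Ioc_consecutive _ (Nat.zero_le _) hKN]
    have hr : |∑ m ∈ Finset.Ioc (K ^ 2) N, f (u m)| ≤ 2 * (K : ℝ) * C := by
      calc |∑ m ∈ Finset.Ioc (K ^ 2) N, f (u m)|
          ≤ ∑ m ∈ Finset.Ioc (K ^ 2) N, |f (u m)| := Finset.abs_sum_le_sum_abs _ _
        _ ≤ ∑ m ∈ Finset.Ioc (K ^ 2) N, C := Finset.sum_le_sum fun m _ => by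
            simpa [hC, Real.norm_eq_abs] using f.norm_coe_le_norm (u m)
        _ = ((N - K ^ 2 : ℕ) : ℝ) * C := by rw [Finset.sum_const, Nat.card_Ioc]; simp
        _ ≤ 2 * (K : ℝ) * C := by
            apply mul_le_mul_of_nonneg_right _ hC0
            have : (N - K ^ 2 : ℕ) ≤ 2 * K := by omega
            exact_mod_cast this
    have ha : |S (K ^ 2)| ≤ (K : ℝ) ^ 2 * C := by
      rw [hS]
      simp only
      calc |∑ m ∈ Finset.Icc 1 (K ^ 2), f (u m)|
          ≤ ∑ m ∈ Finset.Icc 1 (K ^ 2), |f (u m)| := Finset.abs_sum_le_sum_abs _ _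
        _ ≤ ∑ m ∈ Finset.Icc 1 (K ^ 2), C := Finset.sum_le_sum fun m _ => by
            simpa [hC, Real.norm_eq_abs] using f.norm_coe_le_norm (u m)
        _ = (K : ℝ) ^ 2 * C := by
            rw [Finset.sum_const, Nat.card_Icc]
            push_cast
            simp
    have harith := arith_bound (a := S (K ^ 2)) (r := ∑ m ∈ Finset.Ioc (K ^ 2) N, f (u m))
      (n := (N : ℝ)) (k := (K : ℝ)) (by exact_mod_cast hK1)
      (by exact_mod_cast hKN) (by exact_mod_cast hNK) hr ha
    rw [Real.norm_eq_abs, htail]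
    exact harith
  have h0 : Tendsto (fun N : ℕ => 4 * C / (Nat.sqrt N : ℝ)) atTop (𝓝 0) :=
    (tendsto_const_div_atTop_nhds_zero_nat (4 * C)).comp hsqrt
  have hD : Tendsto (fun N : ℕ =>
      S N / (N : ℝ) - S (Nat.sqrt N ^ 2) / ((Nat.sqrt N : ℝ)) ^ 2) atTop (𝓝 0) :=
    squeeze_zero_norm' hbound h0
  have hfin := hD.add hTs
  simp only [sub_add_cancel, zero_add] at hfin
  exact hfin
end

section
/- Let G be a compact topological group with Haar probability measure \mu, H a closed subgroup, X = G/H, \pi the quotient map, \phi a measurable section of \pi, and T(g) = (\pi(g), (\phi\pi(g))^{-1}g). Then the pushforward T_*\mu equals the product measure \rho_X \times \rho_H, where \rho_X is the G-invariant probability measure on X and \rho_H is the normalized Haar measure on H. -/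
open MeasureTheory
open scoped ENNReal NNReal

/-- Uniqueness of Haar measure on a compact group: any finite left-invariant measure is a
multiple of the Haar probability measure. -/
lemma aux_haar_unique_compact {K : Type*} [Group K] [TopologicalSpace K] [IsTopologicalGroup K]
    [CompactSpace K] [MeasurableSpace K] [BorelSpace K]
    (ρ : Measure K) [ρ.IsHaarMeasure] [IsProbabilityMeasure ρ]
    (ν : Measure K) [ν.IsMulLeftInvariant] [IsFiniteMeasure ν] :
    ν = ν Set.univ • ρ := by
  have h := Measure.isMulInvariant_eq_smul_of_compactSpace ν ρ
  have hu : ν Set.univ = (Measure.haarScalarFactor ν ρ : ℝ≥0∞) := by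
    conv_lhs => rw [h]
    simp only [Measure.smul_apply, measure_univ, ENNReal.smul_def, smul_eq_mul, mul_one]
  rw [hu, ← ENNReal.smul_def]
  exact h

/-- A Haar probability measure on a compact group is right invariant. -/
lemma aux_haar_rightInvariant {K : Type*} [Group K] [TopologicalSpace K] [IsTopologicalGroup K]
    [CompactSpace K] [MeasurableSpace K] [BorelSpace K]
    (ρ : Measure K) [ρ.IsHaarMeasure] [IsProbabilityMeasure ρ] :
    ρ.IsMulRightInvariant := by
  constructor
  intro k
  haveI : IsProbabilityMeasure (ρ.map (· * k)) :=
    Measure.isProbabilityMeasure_map (measurable_mul_const k).aemeasurable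
  have h := aux_haar_unique_compact ρ (ρ.map (· * k))
  simpa using h

/-- A Haar probability measure on a compact group is inversion invariant. -/
lemma aux_haar_invInvariant {K : Type*} [Group K] [TopologicalSpace K] [IsTopologicalGroup K]
    [CompactSpace K] [MeasurableSpace K] [BorelSpace K]
    (ρ : Measure K) [ρ.IsHaarMeasure] [IsProbabilityMeasure ρ] :
    ρ.inv = ρ := by
  haveI := aux_haar_rightInvariant ρ
  haveI : ρ.inv.IsMulLeftInvariant := inferInstance
  haveI : IsProbabilityMeasure ρ.inv :=
    Measure.isProbabilityMeasure_map measurable_inv.aemeasurable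
  have h := aux_haar_unique_compact ρ ρ.inv
  simpa using h

theorem subgroup_decomposition_pushforward
    {G : Type*} [Group G] [TopologicalSpace G] [IsTopologicalGroup G] [CompactSpace G]
    [TopologicalSpace.MetrizableSpace G] [MeasurableSpace G] [BorelSpace G]
    (μ : Measure G) [μ.IsHaarMeasure] [IsProbabilityMeasure μ]
    (H : Subgroup G) (hHcl : IsClosed (H : Set G))
    [MeasurableSpace (G ⧸ H)] [BorelSpace (G ⧸ H)]
    (ρH : Measure H) [ρH.IsHaarMeasure] [IsProbabilityMeasure ρH]
    (φ : G ⧸ H → G) (hφmeas : Measurable φ)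
    (hφ : ∀ x : G ⧸ H, (QuotientGroup.mk (φ x) : G ⧸ H) = x) :
    μ.map
        (fun g : G =>
          ((QuotientGroup.mk g : G ⧸ H),
            (⟨(φ (QuotientGroup.mk g))⁻¹ * g,
              QuotientGroup.eq.mp (hφ (QuotientGroup.mk g))⟩ : H)))
      = (μ.map (QuotientGroup.mk : G → G ⧸ H)).prod ρH := by
  haveI : CompactSpace H := isCompact_iff_compactSpace.mp (hHcl.isCompact)
  haveI : BorelSpace H := Subtype.borelSpace (H : Set G)
  -- basic measurability facts
  have hmk : Measurable (QuotientGroup.mk : G → G ⧸ H) :=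
    (continuous_quotient_mk').measurable
  set f : G → H := fun g =>
    (⟨(φ (QuotientGroup.mk g))⁻¹ * g,
      QuotientGroup.eq.mp (hφ (QuotientGroup.mk g))⟩ : H) with hf
  have hfmeas : Measurable f :=
    Measurable.subtype_mk (((hφmeas.comp hmk).inv).mul measurable_id)
  set T : G → (G ⧸ H) × H := fun g => ((QuotientGroup.mk g : G ⧸ H), f g) with hT
  have hTmeas : Measurable T := hmk.prodMk hfmeas
  -- key translation identity: for k : H, f (g * k) = f g * k, and mk (g * k) = mk g
  have hmk_mul : ∀ (g : G) (k : H), (QuotientGroup.mk (g * (k : G)) : G ⧸ H) = QuotientGroup.mk g := by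
    intro g k
    exact QuotientGroup.eq.mpr (by simpa using (H.mul_mem (H.inv_mem k.2) k.2))
  haveI := aux_haar_rightInvariant μ
  haveI : IsProbabilityMeasure (μ.map (QuotientGroup.mk : G → G ⧸ H)) :=
    Measure.isProbabilityMeasure_map hmk.aemeasurable
  symm
  apply Measure.prod_eq
  intro s t hs ht
  -- rewrite the left side
  rw [Measure.map_apply hTmeas (hs.prod ht)]
  have hpre : T ⁻¹' (s ×ˢ t) = (QuotientGroup.mk ⁻¹' s) ∩ (f ⁻¹' t) := by
    ext g; simp [hT, Set.mem_prod]
  rw [hpre]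
  -- the fiber measure
  set A : Set G := (QuotientGroup.mk : G → G ⧸ H) ⁻¹' s with hA
  have hAmeas : MeasurableSet A := hmk hs
  set τ : Measure H := (μ.restrict A).map f with hτ
  have hτ_apply : ∀ {B : Set H}, MeasurableSet B → τ B = μ (A ∩ f ⁻¹' B) := by
    intro B hB
    rw [hτ, Measure.map_apply hfmeas hB, Measure.restrict_apply (hfmeas hB), Set.inter_comm]
  rw [(hτ_apply ht).symm]
  -- τ is right invariant on H
  have hA_inv : ∀ k : H, (fun g : G => g * (k : G)) ⁻¹' A = A := by
    intro k
    ext g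
    simp only [hA, Set.mem_preimage]
    rw [hmk_mul g k]
  have hres_inv : ∀ k : H, (μ.restrict A).map (fun g : G => g * (k : G)) = μ.restrict A := by
    intro k
    have := Measure.restrict_map (μ := μ) (measurable_mul_const (k : G)) hAmeas
    rw [map_mul_right_eq_self μ (k : G), hA_inv k] at this
    exact this.symm
  have hfk : ∀ k : H, (fun h : H => h * k) ∘ f = f ∘ (fun g : G => g * (k : G)) := by
    intro k
    funext g
    ext
    simp only [Function.comp_apply, hf, MulMemClass.coe_mul]
    rw [hmk_mul g k, mul_assoc]
  haveI : τ.IsMulRightInvariant := by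
    constructor
    intro k
    rw [hτ, Measure.map_map (measurable_mul_const k) hfmeas, hfk k,
      ← Measure.map_map hfmeas (measurable_mul_const (k : G)), hres_inv k]
  haveI : IsFiniteMeasure τ := by
    constructor
    rw [hτ]
    calc (μ.restrict A).map f Set.univ ≤ μ.restrict A Set.univ := by
          rw [Measure.map_apply hfmeas MeasurableSet.univ]; exact measure_mono (by simp)
      _ ≤ μ Set.univ := Measure.restrict_le_self _
      _ < ⊤ := measure_lt_top μ _
  -- τ.inv is left invariant, so equal to (τ univ) • ρH
  haveI : τ.inv.IsMulLeftInvariant := inferInstance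
  haveI : IsFiniteMeasure τ.inv := by
    constructor
    rw [Measure.inv_apply]
    simpa using measure_lt_top τ Set.univ
  have hinv := aux_haar_unique_compact ρH τ.inv
  have hτt : τ t = τ.inv t⁻¹ := by rw [Measure.inv_apply, inv_inv]
  have hρinv := aux_haar_invInvariant ρH
  have hρt : ρH t⁻¹ = ρH t := by
    rw [← Measure.inv_apply, hρinv]
  have hτuniv : τ.inv Set.univ = τ Set.univ := by
    rw [Measure.inv_apply, Set.inv_univ]
  rw [hτt, hinv]
  simp only [Measure.smul_apply, smul_eq_mul]
  rw [hρt, hτuniv]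
  have hτuniv' : τ Set.univ = (μ.map (QuotientGroup.mk : G → G ⧸ H)) s := by
    rw [hτ_apply MeasurableSet.univ, Measure.map_apply hmk hs]
    simp [hA]
  rw [hτuniv']
end
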